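/- Let M be a model of a complete first-order theory T, let n ≥ 1, and let A ⊆ M^n be an H-free set such that any two distinct tuples of A have no common coordinates. Then any two tuples ā, b̄ ∈ A realize the same complete n-type over ∅ in M (i.e., for every formula φ(x₁,…,xₙ) without parameters, M ⊨ φ(ā) if and only if M ⊨ φ(b̄)). -/

import Mathlib

open FirstOrder FirstOrder.Language Set

variable {L : Language} {M : Type*} [L.Structure M]

/-- The family of universes of elementary submodels. -/
def ESub (L : Language) (M : Type*) [L.Structure M] : Set (Set M) :=
  {N | ∃ S : L.ElementarySubstructure M, (S : Set M) = N}

def IsHFree (L : Language) (M : Type*) [L.Structure M] {n : ℕ}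
    (A : Set (Fin n → M)) : Prop :=
  A.Infinite ∧
    ∃ (k : ℕ) (φ : L.Formula (Fin n ⊕ Fin k)) (c : Fin k → M),
      A = {x | φ.Realize (Sum.elim x c)} ∧
      ∀ A' : Set (Fin n → M), A' ⊆ A → A'.Infinite →
        ∃ Z ∈ ESub L M, (∀ i, c i ∈ Z) ∧ A' = A ∩ {x | ∀ i, x i ∈ Z}

universe u
theorem key {L : Language} {M : Type u} [L.Structure M] {n : ℕ} (A : Set (Fin n → M)) (hA : IsHFree L M A)
    (ψ : L.Formula (Fin n)) (b : Fin n → M) (hbA : b ∈ A) (hnb : ¬ ψ.Realize b)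
    (hinf : (A ∩ {x | ψ.Realize x}).Infinite) : False := by
  obtain ⟨hinfA, k, φ, c, hdef, hfree⟩ := hA
  obtain ⟨Z, ⟨S, hSZ⟩, hc, hB⟩ := hfree _ inter_subset_left hinf
  -- the formula ∃ x̄, φ(x̄, ȳ) ∧ ¬ψ(x̄), with free variables ȳ : Fin k
  set θ : L.Formula (Fin n ⊕ Fin k) := φ ⊓ (ψ.not.relabel Sum.inl) with hθ
  set χ : L.Formula (Fin k) :=
    (θ.relabel (Sum.elim Sum.inr Sum.inl : Fin n ⊕ Fin k → Fin k ⊕ Fin n)).iExs (Fin n) with hχ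
  have hrealχ : ∀ {N : Type u} [L.Structure N] (v : Fin k → N),
      χ.Realize v ↔ ∃ i : Fin n → N, θ.Realize (Sum.elim i v) := by
    intro N _ v
    rw [hχ, Formula.realize_iExs]
    simp only [Formula.realize_relabel]
    refine exists_congr fun i => iff_of_eq (congrArg _ (funext fun a => ?_))
    cases a <;> rfl
  have hθreal : ∀ (x : Fin n → M), θ.Realize (Sum.elim x c) ↔
      (x ∈ A ∧ ¬ ψ.Realize x) := by
    intro x
    rw [hθ, Formula.realize_inf, Formula.realize_relabel, Formula.realize_not]
    rw [hdef]
    constructor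
    · rintro ⟨h1, h2⟩
      exact ⟨h1, by simpa using h2⟩
    · rintro ⟨h1, h2⟩
      exact ⟨h1, by simpa using h2⟩
  -- χ holds of c in M, witnessed by b
  have hM : χ.Realize c := (hrealχ (N := M) c).2 ⟨b, (hθreal b).2 ⟨hbA, hnb⟩⟩
  -- transfer to S
  have hcS : ∀ i, c i ∈ S := fun i => by rw [← SetLike.mem_coe, hSZ]; exact hc i
  set c' : Fin k → S := fun i => ⟨c i, hcS i⟩ with hc'
  have hcc : (Subtype.val ∘ c' : Fin k → M) = c := rfl
  have hS : χ.Realize c' := by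
    have := S.subtype.map_formula χ c'
    rw [ElementarySubstructure.coe_subtype] at this
    rw [← this, hcc]
    exact hM
  obtain ⟨i, hi⟩ := (hrealχ (N := S) c').1 hS
  have : θ.Realize ((Subtype.val : S → M) ∘ Sum.elim i c') := by
    have := S.subtype.map_formula θ (Sum.elim i c')
    rw [ElementarySubstructure.coe_subtype] at this
    exact this.2 hi
  have heq : ((Subtype.val : S → M) ∘ Sum.elim i c') =
      Sum.elim (Subtype.val ∘ i) c := by
    funext a; cases a <;> rfl
  rw [heq] at this
  obtain ⟨hxA, hxψ⟩ := (hθreal _).1 this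
  have hxZ : (Subtype.val ∘ i) ∈ A ∩ {x | ∀ j, x j ∈ Z} :=
    ⟨hxA, fun j => by rw [← hSZ]; exact (i j).2⟩
  rw [← hB] at hxZ
  exact hxψ hxZ.2

theorem stmt0' {L : Language} {M : Type u} [L.Structure M]
    {n : ℕ} (A : Set (Fin n → M)) (hA : IsHFree L M A)
    (a b : Fin n → M) (haA : a ∈ A) (hbA : b ∈ A)
    (ψ : L.Formula (Fin n)) (ha : ψ.Realize a) (hb : ¬ ψ.Realize b) : False := by
  have h1 : (A ∩ {x | ψ.Realize x}).Finite := by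
    by_contra h
    exact key A hA ψ b hbA hb h
  have h2 : (A ∩ {x | ψ.not.Realize x}).Finite := by
    by_contra h
    refine key A hA ψ.not a haA ?_ h
    rw [Formula.realize_not]
    exact not_not_intro ha
  have : A ⊆ (A ∩ {x | ψ.Realize x}) ∪ (A ∩ {x | ψ.not.Realize x}) := by
    intro x hx
    by_cases hψ : ψ.Realize x
    · exact Or.inl ⟨hx, hψ⟩
    · exact Or.inr ⟨hx, by rwa [Set.mem_setOf_eq, Formula.realize_not]⟩
  exact hA.1 ((h1.union h2).subset this)


theorem stmt0 (T : L.Theory) (hT : T.IsComplete) (hM : M ⊨ T)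
    {n : ℕ} (hn : 1 ≤ n) (A : Set (Fin n → M)) (hA : IsHFree L M A)
    (hcoord : ∀ x ∈ A, ∀ y ∈ A, x ≠ y → ∀ i j, x i ≠ y j)
    (a b : Fin n → M) (haA : a ∈ A) (hbA : b ∈ A) :
    ∀ φ : L.Formula (Fin n), φ.Realize a ↔ φ.Realize b := by
  intro φ
  constructor
  · intro h
    by_contra hb
    exact stmt0' A hA a b haA hbA φ h hb
  · intro h
    by_contra ha
    exact stmt0' A hA b a hbA haA φ h ha
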